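/- The generating function A(t) for the number of 321-avoiding permutations of length n satisfies t·A(t)² − A(t) + 1 = 0, where A(t) = Σ_n c_n tⁿ and c_n is the number of 321-avoiding permutations of {1,...,n}. -/

import Mathlib

open List

def HasPat (l : List ℕ) : Prop := ∃ a b c : ℕ, c < b ∧ b < a ∧ [a, b, c] <+ l

def Av (l : List ℕ) : Prop := ¬ HasPat l

lemma Av.sublist {l l' : List ℕ} (h : Av l) (hs : l' <+ l) : Av l' := by
  rintro ⟨a, b, c, h1, h2, h3⟩
  exact h ⟨a, b, c, h1, h2, h3.trans hs⟩

/-- Key insertion lemma: inserting a new maximum `m`. -/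
lemma av_insert_max {L R : List ℕ} {m : ℕ} (hm : ∀ x ∈ L ++ R, x < m)
    (hnd : (L ++ R).Nodup) :
    Av (L ++ m :: R) ↔ Av (L ++ R) ∧ R.Pairwise (· < ·) := by
  constructor
  · intro h
    refine ⟨h.sublist (by simp), ?_⟩
    rw [List.pairwise_iff_forall_sublist]
    intro a b hab
    by_contra hlt
    have haR : a ∈ R := hab.subset (by simp)
    have hbR : b ∈ R := hab.subset (by simp)
    have hba : b < a := by
      rcases Nat.lt_trichotomy a b with h1 | h1 | h1
      · exact absurd h1 hlt
      · subst h1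
        have hndR : R.Nodup := (List.nodup_append.mp hnd).2.1
        have := List.Pairwise.sublist hab hndR
        simp at this
      · exact h1
    exact h ⟨m, a, b, hba, hm a (by simp [haR]), by
      refine List.Sublist.append (List.nil_sublist L) ?_
      exact List.cons_sublist_cons.mpr hab⟩
  · rintro ⟨hav, hsort⟩ ⟨a, b, c, hcb, hba, hsub⟩
    rw [List.sublist_append_iff] at hsub
    obtain ⟨l₁, l₂, heq, h₁, h₂⟩ := hsub
    rw [List.sublist_cons_iff] at h₂
    rcases h₂ with h₂ | ⟨r, hr, hrR⟩
    · exact hav ⟨a, b, c, hcb, hba, heq ▸ List.Sublist.append h₁ h₂⟩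
    · subst hr
      match l₁, heq with
      | [], heq =>
        simp only [List.nil_append, List.cons.injEq] at heq
        obtain ⟨ham, hbc⟩ := heq
        rw [← hbc] at hrR
        have := List.pairwise_iff_forall_sublist.mp hsort hrR
        omega
      | [x], heq =>
        simp only [List.cons_append, List.nil_append, List.cons.injEq] at heq
        obtain ⟨hax, hbm, -⟩ := heq
        have haL : a ∈ L := by rw [hax]; exact h₁.subset (by simp)
        have : a < m := hm a (by simp [haL])
        omega
      | [x, y], heq =>
        simp only [List.cons_append, List.nil_append, List.cons.injEq] at heq
        obtain ⟨hax, hby, hcm, -⟩ := heq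
        have hbL : b ∈ L := by rw [hby]; exact h₁.subset (by simp)
        have : b < m := hm b (by simp [hbL])
        omega
      | x :: y :: z :: t, heq =>
        have := congrArg List.length heq
        simp at this

open Finset

attribute [local instance] Classical.propDecidable

lemma av_of_sorted {l : List ℕ} (h : l.Pairwise (· < ·)) : Av l := by
  rintro ⟨a, b, c, h1, h2, h3⟩
  have : a < b := List.pairwise_iff_forall_sublist.mp h
    (show [a, b] <+ l from (by simpa using List.Sublist.trans (by simp) h3))
  omega

noncomputable def AvS (n : ℕ) : Finset (List ℕ) :=
  ((List.range n).permutations.toFinset).filter fun l => Av l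

noncomputable def BS (n p : ℕ) : Finset (List ℕ) :=
  (AvS n).filter fun l => (l.drop (n - p)).Pairwise (· < ·)

noncomputable def b (n p : ℕ) : ℕ := (BS n p).card

lemma mem_BS {n p : ℕ} {l : List ℕ} :
    l ∈ BS n p ↔ l ~ List.range n ∧ Av l ∧ (l.drop (n - p)).Pairwise (· < ·) := by
  simp [BS, AvS, List.mem_permutations, and_assoc]

lemma perm_range_lt {n : ℕ} {v : List ℕ} (hv : v ~ List.range n) {x : ℕ} (hx : x ∈ v) : x < n := by
  have := hv.mem_iff.mp hx
  simpa using this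

lemma perm_range_nodup {n : ℕ} {v : List ℕ} (hv : v ~ List.range n) : v.Nodup :=
  hv.nodup_iff.mpr List.nodup_range

lemma perm_range_length {n : ℕ} {v : List ℕ} (hv : v ~ List.range n) : v.length = n := by
  simpa using hv.length_eq

/-- insert the value `n` at position `j`. -/
def ins (n j : ℕ) (v : List ℕ) : List ℕ := v.take j ++ n :: v.drop j

lemma ins_perm {n j : ℕ} {v : List ℕ} (hv : v ~ List.range n) :
    ins n j v ~ List.range (n + 1) := by
  have h1 : ins n j v ~ n :: v := by
    unfold ins
    calc v.take j ++ n :: v.drop j ~ n :: (v.take j ++ v.drop j) :=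
          (List.perm_middle)
      _ = n :: v := by rw [List.take_append_drop]
  refine h1.trans ?_
  rw [List.range_succ (n := n)]
  exact (List.Perm.cons n hv).trans (List.perm_append_singleton n _).symm

lemma append_cons_inj {m : ℕ} : ∀ {L1 L2 R1 R2 : List ℕ},
    L1 ++ m :: R1 = L2 ++ m :: R2 → m ∉ L1 → m ∉ L2 → L1 = L2 ∧ R1 = R2 := by
  intro L1
  induction L1 with
  | nil =>
    intro L2 R1 R2 h h1 h2
    cases L2 with
    | nil => simpa using h
    | cons x t =>
      simp at h
      exact absurd (by simp [h.1]) h2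
  | cons x t ih =>
    intro L2 R1 R2 h h1 h2
    cases L2 with
    | nil =>
      simp at h
      exact absurd (by simp [h.1]) h1
    | cons y s =>
      simp only [List.cons_append, List.cons.injEq] at h
      obtain ⟨hxy, h'⟩ := h
      obtain ⟨hL, hR⟩ := ih h' (by simp at h1; exact h1.2) (by simp at h2; exact h2.2)
      exact ⟨by rw [hxy, hL], hR⟩

lemma notmem_take {n j : ℕ} {v : List ℕ} (hv : v ~ List.range n) : n ∉ v.take j :=
  fun h => absurd (perm_range_lt hv (List.take_subset j v h)) (lt_irrefl n)

lemma notmem_drop {n j : ℕ} {v : List ℕ} (hv : v ~ List.range n) : n ∉ v.drop j :=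
  fun h => absurd (perm_range_lt hv (List.drop_subset j v h)) (lt_irrefl n)

lemma ins_inj {n j j' : ℕ} {v v' : List ℕ} (hv : v ~ List.range n) (hv' : v' ~ List.range n)
    (hj : j ≤ n) (hj' : j' ≤ n) (h : ins n j v = ins n j' v') : j = j' ∧ v = v' := by
  unfold ins at h
  obtain ⟨hL, hR⟩ := append_cons_inj h (notmem_take hv) (notmem_take hv')
  have hlen : j = j' := by
    have := congrArg List.length hL
    simpa [perm_range_length hv, perm_range_length hv', Nat.min_eq_left hj,
      Nat.min_eq_left hj'] using this
  subst hlen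
  refine ⟨rfl, ?_⟩
  rw [← List.take_append_drop j v, ← List.take_append_drop j v', hL, hR]

lemma ins_surj {n : ℕ} {w : List ℕ} (hw : w ~ List.range (n + 1)) :
    ∃ j ≤ n, ∃ v, v ~ List.range n ∧ w = ins n j v ∧
      v.take j = w.take j ∧ v.drop j = w.drop (j + 1) := by
  have hnw : n ∈ w := hw.mem_iff.mpr (by simp)
  obtain ⟨L, R, hLR⟩ := List.append_of_mem hnw
  have hvperm : (L ++ R) ~ List.range n := by
    have h1 : w ~ n :: (L ++ R) := by rw [hLR]; exact List.perm_middle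
    have h2 : List.range (n+1) ~ n :: List.range n := by
      rw [List.range_succ]
      exact (List.perm_append_singleton n _)
    exact (h1.symm.trans hw |>.trans h2).cons_inv
  have hLn : L.length ≤ n := by
    have := perm_range_length hvperm
    simp at this
    omega
  refine ⟨L.length, hLn, L ++ R, hvperm, ?_, ?_, ?_⟩
  · rw [hLR]
    unfold ins
    rw [List.take_left, List.drop_left]
  · rw [hLR, List.take_left]
    rw [List.take_append_of_le_length le_rfl, List.take_length]
  · rw [hLR, List.drop_left, List.drop_length_add_append 1]
    simp

lemma av_ins_iff {n j : ℕ} {v : List ℕ} (hv : v ~ List.range n) :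
    Av (ins n j v) ↔ Av v ∧ (v.drop j).Pairwise (· < ·) := by
  unfold ins
  rw [av_insert_max (fun x hx => by
        rw [List.take_append_drop] at hx; exact perm_range_lt hv hx)
      (by rw [List.take_append_drop]; exact perm_range_nodup hv)]
  rw [List.take_append_drop]

lemma drop_ins_le {n j t : ℕ} {v : List ℕ} (ht : t ≤ j) (hj : j ≤ v.length) :
    (ins n j v).drop t = (v.take j).drop t ++ n :: v.drop j := by
  unfold ins
  rw [List.drop_append_of_le_length (by simp [Nat.min_eq_left hj]; omega)]

lemma drop_ins_gt {n j t : ℕ} {v : List ℕ} (ht : j < t) (hj : j ≤ v.length) :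
    (ins n j v).drop t = v.drop (t - 1) := by
  unfold ins
  have h1 : t = (v.take j).length + (t - j) := by
    simp [Nat.min_eq_left hj]; omega
  rw [h1, List.drop_length_add_append]
  have h2 : t - j = (t - j - 1) + 1 := by omega
  rw [h2, List.drop_succ_cons, List.drop_drop]
  congr 1
  omega

lemma sorted_drop_of_sorted_drop {j t : ℕ} {v : List ℕ} (h : (v.drop j).Pairwise (· < ·))
    (hjt : j ≤ t) : (v.drop t).Pairwise (· < ·) := by
  have : v.drop t = (v.drop j).drop (t - j) := by
    rw [List.drop_drop]; congr 1; omega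
  rw [this]
  exact h.sublist (List.drop_sublist _ _)

lemma ins_length {n j : ℕ} {v : List ℕ} : (ins n j v).length = v.length + 1 := by
  simp [ins]; omega

/-- Master membership lemma, case p = 0. -/
lemma mem_BS_succ_zero {n : ℕ} {w : List ℕ} :
    w ∈ BS (n + 1) 0 ↔ ∃ j < n + 1, ∃ v ∈ BS n (n - j), w = ins n j v := by
  constructor
  · intro hw
    rw [mem_BS] at hw
    obtain ⟨hperm, hav, -⟩ := hw
    obtain ⟨j, hj, v, hvperm, hw, -, hdrop⟩ := ins_surj hperm
    refine ⟨j, by omega, v, ?_, hw⟩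
    rw [mem_BS]
    have := (av_ins_iff (j := j) hvperm).mp (hw ▸ hav)
    refine ⟨hvperm, this.1, ?_⟩
    rw [Nat.sub_sub_self hj]
    exact this.2
  · rintro ⟨j, hj, v, hv, rfl⟩
    rw [mem_BS] at hv ⊢
    obtain ⟨hvperm, hav, hsort⟩ := hv
    rw [Nat.sub_sub_self (by omega)] at hsort
    refine ⟨ins_perm hvperm, (av_ins_iff hvperm).mpr ⟨hav, hsort⟩, ?_⟩
    have hl : (ins n j v).length = n + 1 := by
      rw [ins_length, perm_range_length hvperm]
    rw [Nat.sub_zero, List.drop_eq_nil_of_le (le_of_eq hl)]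
    simp

/-- Master membership lemma, case p ≥ 1. -/
lemma mem_BS_succ_pos {n p : ℕ} (hp : 1 ≤ p) (hp2 : p ≤ n + 1) {w : List ℕ} :
    w ∈ BS (n + 1) p ↔ (∃ j < n + 1 - p, ∃ v ∈ BS n (n - j), w = ins n j v) ∨
      (∃ v ∈ BS n (p - 1), w = ins n n v) := by
  constructor
  · intro hw
    rw [mem_BS] at hw
    obtain ⟨hperm, hav, hsortp⟩ := hw
    obtain ⟨j, hj, v, hvperm, hw, -, -⟩ := ins_surj hperm
    have hvlen : v.length = n := perm_range_length hvperm
    have hins := (av_ins_iff (j := j) hvperm).mp (hw ▸ hav)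
    rcases Nat.lt_or_ge j (n + 1 - p) with hcase | hcase
    · left
      refine ⟨j, hcase, v, ?_, hw⟩
      rw [mem_BS]
      refine ⟨hvperm, hins.1, ?_⟩
      rw [Nat.sub_sub_self (by omega)]
      exact hins.2
    · -- j ≥ n + 1 - p; show j = n
      have hjn : j = n := by
        by_contra hne
        have hjlt : j < n := by omega
        have hd := drop_ins_le (n := n) (j := j) (v := v) (t := n + 1 - p)
          (by omega) (by omega)
        rw [← hw] at hd
        have hne2 : v.drop j ≠ [] := by
          intro h
          have := congrArg List.length h
          simp [hvlen] at this
          omega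
        obtain ⟨y, ys, hy⟩ := List.exists_cons_of_ne_nil hne2
        have hyv : y ∈ v := List.drop_subset _ _ (by rw [hy]; simp)
        have hylt : y < n := perm_range_lt hvperm hyv
        have : n < y := by
          have hsub : [n, y] <+ w.drop (n + 1 - p) := by
            rw [hd, hy]
            refine List.Sublist.append (List.nil_sublist _) ?_
            exact List.cons_sublist_cons.mpr (by simp)
          exact List.pairwise_iff_forall_sublist.mp hsortp hsub
        omega
      right
      refine ⟨v, ?_, by rw [hw, hjn]⟩
      rw [mem_BS]
      refine ⟨hvperm, hins.1, ?_⟩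
      have hd := drop_ins_le (n := n) (j := j) (v := v) (t := n + 1 - p)
        (by omega) (by omega)
      rw [← hw, hjn] at hd
      rw [List.take_of_length_le (le_of_eq hvlen), List.drop_eq_nil_of_le (le_of_eq hvlen)] at hd
      have he : n - (p - 1) = n + 1 - p := by omega
      rw [he]
      exact hsortp.sublist (by rw [hd]; exact List.sublist_append_left _ _)
  · rintro (⟨j, hjlt, v, hv, rfl⟩ | ⟨v, hv, rfl⟩)
    · rw [mem_BS] at hv ⊢
      obtain ⟨hvperm, hav, hsort⟩ := hv
      have hvlen : v.length = n := perm_range_length hvperm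
      rw [Nat.sub_sub_self (by omega)] at hsort
      refine ⟨ins_perm hvperm, (av_ins_iff hvperm).mpr ⟨hav, hsort⟩, ?_⟩
      rw [drop_ins_gt (by omega) (by omega)]
      have he : n + 1 - p - 1 = n - p := by omega
      rw [he]
      exact sorted_drop_of_sorted_drop hsort (by omega)
    · rw [mem_BS] at hv ⊢
      obtain ⟨hvperm, hav, hsort⟩ := hv
      have hvlen : v.length = n := perm_range_length hvperm
      have hdn : v.drop n = [] := List.drop_eq_nil_of_le (le_of_eq hvlen)
      refine ⟨ins_perm hvperm, (av_ins_iff hvperm).mpr ⟨hav, by rw [hdn]; simp⟩, ?_⟩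
      rw [drop_ins_le (by omega) (by omega), List.take_of_length_le (le_of_eq hvlen), hdn]
      have he : n - (p - 1) = n + 1 - p := by omega
      rw [he] at hsort
      rw [List.pairwise_append]
      refine ⟨hsort, by simp, ?_⟩
      intro a ha c hc
      simp at hc
      subst hc
      exact perm_range_lt hvperm (List.drop_subset _ _ ha)

lemma ins_injOn {n j q : ℕ} (hj : j ≤ n) : Set.InjOn (ins n j) (BS n q : Set (List ℕ)) := by
  intro v hv v' hv' h
  exact (ins_inj ((mem_BS.mp (Finset.mem_coe.mp hv)).1)
    ((mem_BS.mp (Finset.mem_coe.mp hv')).1) hj hj h).2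

lemma ins_images_disjoint {n j j' : ℕ} (hj : j ≤ n) (hj' : j' ≤ n) (hne : j ≠ j')
    {q q' : ℕ} : Disjoint ((BS n q).image (ins n j)) ((BS n q').image (ins n j')) := by
  rw [Finset.disjoint_left]
  rintro w hw hw'
  simp only [Finset.mem_image] at hw hw'
  obtain ⟨v, hv, rfl⟩ := hw
  obtain ⟨v', hv', heq⟩ := hw'
  exact hne ((ins_inj ((mem_BS.mp hv).1) ((mem_BS.mp hv').1) hj hj' heq.symm).1)

lemma reindex_sum {n p : ℕ} (hp2 : p ≤ n + 1) (g : ℕ → ℕ) :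
    ∑ j ∈ Finset.range (n + 1 - p), g (n - j) = ∑ q ∈ Finset.Icc p n, g q := by
  refine Finset.sum_nbij' (fun j => n - j) (fun q => n - q) ?_ ?_ ?_ ?_ ?_
  · intro j hj; simp only [Finset.mem_range] at hj; simp only [Finset.mem_Icc]; omega
  · intro q hq; simp only [Finset.mem_Icc] at hq; simp only [Finset.mem_range]; omega
  · intro j hj; simp only [Finset.mem_range] at hj; show n - (n - j) = j; omega
  · intro q hq; simp only [Finset.mem_Icc] at hq; show n - (n - q) = q; omega
  · intro j hj; rfl

lemma card_image_ins {n j q : ℕ} (hj : j ≤ n) :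
    ((BS n q).image (ins n j)).card = b n q := by
  rw [Finset.card_image_of_injOn (ins_injOn hj)]
  rfl

/-- Recurrence, p = 0 case. -/
lemma b_succ_zero (n : ℕ) : b (n + 1) 0 = ∑ q ∈ Finset.range (n + 1), b n q := by
  have hset : BS (n + 1) 0 =
      (Finset.range (n + 1)).biUnion (fun j => (BS n (n - j)).image (ins n j)) := by
    ext w
    rw [mem_BS_succ_zero]
    simp only [Finset.mem_biUnion, Finset.mem_range, Finset.mem_image]
    constructor
    · rintro ⟨j, hj, v, hv, rfl⟩; exact ⟨j, hj, v, hv, rfl⟩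
    · rintro ⟨j, hj, v, hv, rfl⟩; exact ⟨j, hj, v, hv, rfl⟩
  have : b (n + 1) 0 = ∑ j ∈ Finset.range (n + 1), b n (n - j) := by
    unfold b
    rw [hset, Finset.card_biUnion]
    · exact Finset.sum_congr rfl fun j hj =>
        card_image_ins (by simp at hj; omega)
    · intro j hj j' hj' hne
      simp only [Finset.mem_coe, Finset.mem_range] at hj hj'
      exact ins_images_disjoint (by omega) (by omega) hne
  rw [this]
  have h2 := reindex_sum (n := n) (p := 0) (by omega) (b n)
  simp only [Nat.sub_zero] at h2
  rw [h2, show Finset.Icc 0 n = Finset.range (n+1) from by ext x; simp [Nat.lt_succ_iff]]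

/-- Recurrence, p ≥ 1 case. -/
lemma b_succ_pos (n p : ℕ) (hp : 1 ≤ p) (hp2 : p ≤ n + 1) :
    b (n + 1) p = b n (p - 1) + ∑ q ∈ Finset.Icc p n, b n q := by
  have hset : BS (n + 1) p =
      ((Finset.range (n + 1 - p)).biUnion (fun j => (BS n (n - j)).image (ins n j))) ∪
        (BS n (p - 1)).image (ins n n) := by
    ext w
    rw [mem_BS_succ_pos hp hp2]
    simp only [Finset.mem_union, Finset.mem_biUnion, Finset.mem_range, Finset.mem_image]
    constructor
    · rintro (⟨j, hj, v, hv, rfl⟩ | ⟨v, hv, rfl⟩)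
      exacts [Or.inl ⟨j, hj, v, hv, rfl⟩, Or.inr ⟨v, hv, rfl⟩]
    · rintro (⟨j, hj, v, hv, rfl⟩ | ⟨v, hv, rfl⟩)
      exacts [Or.inl ⟨j, hj, v, hv, rfl⟩, Or.inr ⟨v, hv, rfl⟩]
  unfold b
  rw [hset, Finset.card_union_of_disjoint, Finset.card_biUnion]
  · rw [Nat.add_comm]
    congr 1
    · exact card_image_ins (n := n) (j := n) le_rfl
    · calc ∑ u ∈ Finset.range (n+1-p), ((BS n (n-u)).image (ins n u)).card
          = ∑ u ∈ Finset.range (n+1-p), (BS n (n-u)).card :=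
            Finset.sum_congr rfl fun j hj => card_image_ins (by simp at hj; omega)
        _ = _ := reindex_sum hp2 (fun q => (BS n q).card)
  · intro j hj j' hj' hne
    simp only [Finset.mem_coe, Finset.mem_range] at hj hj'
    exact ins_images_disjoint (by omega) (by omega) hne
  · rw [Finset.disjoint_left]
    rintro w hw hw'
    simp only [Finset.mem_biUnion, Finset.mem_range, Finset.mem_image] at hw hw'
    obtain ⟨j, hj, v, hv, rfl⟩ := hw
    obtain ⟨v', hv', heq⟩ := hw'
    have : n = j := (ins_inj ((mem_BS.mp hv').1) ((mem_BS.mp hv).1) le_rfl (by omega) heq).1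
    omega

lemma BS_stab {n p : ℕ} (h : n ≤ p) : BS n p = BS n n := by
  unfold BS
  rw [Nat.sub_eq_zero_of_le h, Nat.sub_self]

lemma b_zero_zero : b 0 0 = 1 := by
  have : BS 0 0 = {[]} := by
    ext l
    rw [mem_BS]
    simp only [List.range_zero, Finset.mem_singleton]
    constructor
    · rintro ⟨h, -, -⟩; exact h.eq_nil
    · rintro rfl
      exact ⟨List.Perm.refl _, av_of_sorted (by simp), by simp⟩
  rw [b, this]
  rfl

lemma b_self (n : ℕ) : b n n = 1 := by
  have : BS n n = {List.range n} := by
    ext l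
    rw [mem_BS]
    simp only [Finset.mem_singleton, Nat.sub_self, List.drop_zero]
    constructor
    · rintro ⟨h1, -, h3⟩
      exact List.Perm.eq_of_pairwise (fun a b _ _ h1 h2 => by omega) h3 List.pairwise_lt_range h1
    · rintro rfl
      exact ⟨List.Perm.refl _, av_of_sorted List.pairwise_lt_range,
        List.pairwise_lt_range⟩
  rw [b, this]
  rfl

lemma sorted_of_length_le_one {l : List ℕ} (h : l.length ≤ 1) : l.Pairwise (· < ·) := by
  match l, h with
  | [], _ => simp
  | [x], _ => simp

lemma BS_one_eq_zero (n : ℕ) : BS n 1 = BS n 0 := by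
  ext l
  rw [mem_BS, mem_BS]
  refine and_congr_right fun h1 => and_congr_right fun _ => ?_
  have hlen : l.length = n := perm_range_length h1
  constructor
  · intro _
    exact sorted_of_length_le_one (by rw [List.length_drop]; omega)
  · intro _
    exact sorted_of_length_le_one (by rw [List.length_drop]; omega)

/-- The main combinatorial identity. -/
lemma b_formula : ∀ n, ∀ p, 1 ≤ p → p ≤ n →
    b n p = ∑ k ∈ Finset.range (n - p + 1), b k 0 * b (n - 1 - k) (p - 1) := by
  intro n
  induction n with
  | zero => intro p h1 h2; omega
  | succ n ih =>
    intro p hp hpn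
    rcases Nat.eq_or_lt_of_le hpn with hcase | hcase
    · -- p = n + 1
      subst hcase
      rw [b_succ_pos n (n + 1) (by omega) le_rfl]
      rw [show Finset.Icc (n + 1) n = ∅ from Finset.Icc_eq_empty (by omega)]
      rw [show n + 1 - (n + 1) + 1 = 1 from by omega, Finset.sum_range_one]
      simp [b_zero_zero, b_self]
    · -- p ≤ n
      have hpn' : p ≤ n := by omega
      rw [b_succ_pos n p hp (by omega)]
      have hsum : ∑ q ∈ Finset.Icc p n, b n q =
          ∑ q ∈ Finset.Icc p n, ∑ k ∈ Finset.range (n - q + 1),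
            b k 0 * b (n - 1 - k) (q - 1) :=
        Finset.sum_congr rfl fun q hq => by
          simp only [Finset.mem_Icc] at hq
          exact ih q (by omega) hq.2
      rw [hsum]
      have hswap : ∑ q ∈ Finset.Icc p n, ∑ k ∈ Finset.range (n - q + 1),
            b k 0 * b (n - 1 - k) (q - 1) =
          ∑ k ∈ Finset.range (n - p + 1), ∑ q ∈ Finset.Icc p (n - k),
            b k 0 * b (n - 1 - k) (q - 1) := by
        rw [Finset.sum_sigma', Finset.sum_sigma']
        refine Finset.sum_nbij' (fun x => ⟨x.2, x.1⟩) (fun x => ⟨x.2, x.1⟩) ?_ ?_ ?_ ?_ ?_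
        · rintro ⟨q, k⟩ hx
          simp only [Finset.mem_sigma, Finset.mem_Icc, Finset.mem_range] at hx ⊢
          omega
        · rintro ⟨k, q⟩ hx
          simp only [Finset.mem_sigma, Finset.mem_Icc, Finset.mem_range] at hx ⊢
          omega
        · rintro ⟨q, k⟩ _; rfl
        · rintro ⟨k, q⟩ _; rfl
        · rintro ⟨q, k⟩ _; rfl
      rw [hswap]
      have hinner : ∑ k ∈ Finset.range (n - p + 1), ∑ q ∈ Finset.Icc p (n - k),
            b k 0 * b (n - 1 - k) (q - 1) =
          ∑ k ∈ Finset.range (n - p + 1),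
            b k 0 * ∑ r ∈ Finset.Icc (p - 1) (n - 1 - k), b (n - 1 - k) r := by
        refine Finset.sum_congr rfl fun k hk => ?_
        simp only [Finset.mem_range] at hk
        rw [Finset.mul_sum]
        refine Finset.sum_nbij' (fun q => q - 1) (fun r => r + 1) ?_ ?_ ?_ ?_ ?_
        · intro q hq; simp only [Finset.mem_Icc] at hq ⊢; omega
        · intro r hr; simp only [Finset.mem_Icc] at hr ⊢; omega
        · intro q hq; simp only [Finset.mem_Icc] at hq; show q - 1 + 1 = q; omega
        · intro r hr; show r + 1 - 1 = r; omega
        · intro q hq; rfl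
      rw [hinner]
      conv_rhs => rw [show n + 1 - p + 1 = (n - p + 1) + 1 from by omega,
        Finset.sum_range_succ, show n + 1 - 1 = n from rfl]
      rcases Nat.eq_or_lt_of_le hp with hp1 | hp2
      · -- p = 1
        rw [← hp1]
        have h3 : ∑ k ∈ Finset.range (n - 1 + 1), b k 0 * b (n - k) (1 - 1) =
            ∑ k ∈ Finset.range (n - 1 + 1),
              b k 0 * ∑ r ∈ Finset.Icc (1 - 1) (n - 1 - k), b (n - 1 - k) r :=
          Finset.sum_congr rfl fun k hk => by
            have hk' : k ≤ n - 1 := by simp at hk; omega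
            have h2 : n - k = (n - 1 - k) + 1 := by omega
            rw [h2, b_succ_zero (n - 1 - k)]
            rw [show Finset.range (n - 1 - k + 1) = Finset.Icc (1 - 1) (n - 1 - k) from by
              ext x; simp [Nat.lt_succ_iff]]
        rw [h3]
        rw [show n - (n - 1 + 1) = 0 from by omega]
        rw [show (1 : ℕ) - 1 = 0 from rfl, b_zero_zero, mul_one]
        rw [show n - 1 + 1 = n from by omega]
        ring
      · -- p ≥ 2
        have h3 : ∑ k ∈ Finset.range (n - p + 1), b k 0 * b (n - k) (p - 1) =
            ∑ k ∈ Finset.range (n - p + 1), (b k 0 * b (n - 1 - k) (p - 2) +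
              b k 0 * ∑ r ∈ Finset.Icc (p - 1) (n - 1 - k), b (n - 1 - k) r) :=
          Finset.sum_congr rfl fun k hk => by
            have hk' : k ≤ n - p := by simp at hk; omega
            have h2 : n - k = (n - 1 - k) + 1 := by omega
            rw [h2, b_succ_pos (n - 1 - k) (p - 1) (by omega) (by omega)]
            rw [show p - 1 - 1 = p - 2 from by omega, Nat.mul_add]
        rw [h3, Finset.sum_add_distrib, show n - (n - p + 1) = p - 1 from by omega]
        have h6 := ih (p - 1) (by omega) (by omega)
        rw [show n - (p - 1) + 1 = (n - p + 1) + 1 from by omega, Finset.sum_range_succ,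
          show p - 1 - 1 = p - 2 from by omega,
          show n - 1 - (n - p + 1) = p - 2 from by omega, b_self] at h6
        rw [b_self, h6]
        ring

lemma b_conv (n : ℕ) : b (n + 1) 0 = ∑ k ∈ Finset.range (n + 1), b k 0 * b (n - k) 0 := by
  have h1 : b (n + 1) 0 = b (n + 1) 1 := by unfold b; rw [BS_one_eq_zero]
  rw [h1, b_formula (n + 1) 1 le_rfl (by omega)]
  norm_num

def Avoids321 {n : ℕ} (π : Equiv.Perm (Fin n)) : Prop :=
  ¬ ∃ i j k : Fin n, i < j ∧ j < k ∧ π k < π j ∧ π j < π i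

lemma hasPat_iff_get {l : List ℕ} : HasPat l ↔ ∃ i j k : Fin l.length,
    i < j ∧ j < k ∧ l.get k < l.get j ∧ l.get j < l.get i := by
  constructor
  · rintro ⟨a, b, c, h1, h2, hsub⟩
    obtain ⟨is, heq, hpw⟩ := List.sublist_eq_map_getElem hsub
    match is, heq, hpw with
    | [i, j, k], heq, hpw =>
      obtain ⟨ha, hb, hc⟩ : a = l.get i ∧ b = l.get j ∧ c = l.get k := by
        simpa using heq
      simp only [List.pairwise_cons, List.mem_cons] at hpw
      refine ⟨i, j, k, ?_, ?_, ?_, ?_⟩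
      · exact hpw.1 j (by simp)
      · exact hpw.2.1 k (by simp)
      · rw [← hb, ← hc]; exact h1
      · rw [← ha, ← hb]; exact h2
  · rintro ⟨i, j, k, hij, hjk, h1, h2⟩
    refine ⟨l.get i, l.get j, l.get k, h1, h2, ?_⟩
    have := List.map_getElem_sublist (l := l) (is := [i, j, k]) (by
      simp only [List.pairwise_cons, List.mem_cons]
      constructor
      · rintro a (rfl | rfl | h)
        · exact hij
        · exact hij.trans hjk
        · simp at h
      constructor
      · rintro a (rfl | h)
        · exact hjk
        · simp at h
      simp)
    simpa using this

/-- the list associated to a permutation -/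
def toL {n : ℕ} (π : Equiv.Perm (Fin n)) : List ℕ := List.ofFn (fun i => (π i : ℕ))

lemma toL_length {n : ℕ} (π : Equiv.Perm (Fin n)) : (toL π).length = n :=
  List.length_ofFn

lemma toL_perm {n : ℕ} (π : Equiv.Perm (Fin n)) : toL π ~ List.range n := by
  refine List.perm_of_nodup_nodup_toFinset_eq ?_ List.nodup_range ?_
  · exact List.nodup_ofFn.mpr (fun i j h => π.injective (Fin.val_injective h))
  · ext x
    simp only [toL, List.mem_toFinset, List.mem_ofFn, Set.mem_range, List.mem_range]
    constructor
    · rintro ⟨i, hi⟩; rw [← hi]; exact (π i).isLt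
    · intro hx; exact ⟨π.symm ⟨x, hx⟩, by simp⟩

lemma toL_get {n : ℕ} (π : Equiv.Perm (Fin n)) (i : Fin (toL π).length) :
    (toL π).get i = π (Fin.cast (toL_length π) i) := List.getElem_ofFn _

lemma toL_av_iff {n : ℕ} (π : Equiv.Perm (Fin n)) : Av (toL π) ↔ Avoids321 π := by
  have hl : (toL π).length = n := toL_length π
  have hcc : ∀ m : Fin n, Fin.cast hl (Fin.cast hl.symm m) = m := fun m => Fin.ext rfl
  unfold Av Avoids321
  rw [hasPat_iff_get]
  constructor
  · rintro h ⟨i, j, k, hij, hjk, h1, h2⟩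
    refine h ⟨Fin.cast hl.symm i, Fin.cast hl.symm j, Fin.cast hl.symm k, ?_, ?_, ?_, ?_⟩
    · simp only [Fin.lt_def, Fin.coe_cast]
      exact Fin.lt_def.mp hij
    · simp only [Fin.lt_def, Fin.coe_cast]
      exact Fin.lt_def.mp hjk
    · simp only [toL_get, hcc]
      exact h1
    · simp only [toL_get, hcc]
      exact h2
  · rintro h ⟨i, j, k, hij, hjk, h1, h2⟩
    simp only [toL_get] at h1 h2
    refine h ⟨Fin.cast hl i, Fin.cast hl j, Fin.cast hl k, ?_, ?_, h1, h2⟩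
    · simp only [Fin.lt_def, Fin.coe_cast]
      exact Fin.lt_def.mp hij
    · simp only [Fin.lt_def, Fin.coe_cast]
      exact Fin.lt_def.mp hjk

lemma natCard_avoiders (n : ℕ) :
    Nat.card {π : Equiv.Perm (Fin n) // Avoids321 π} = b n 0 := by
  have hmemBS : ∀ (π : Equiv.Perm (Fin n)), Avoids321 π → toL π ∈ BS n 0 := by
    intro π h
    rw [mem_BS]
    refine ⟨toL_perm π, (toL_av_iff π).mpr h, ?_⟩
    rw [Nat.sub_zero, List.drop_eq_nil_of_le (le_of_eq (toL_length π))]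
    simp
  have hf : Function.Bijective
      (fun x : {π : Equiv.Perm (Fin n) // Avoids321 π} =>
        (⟨toL x.1, hmemBS x.1 x.2⟩ : {l // l ∈ BS n 0})) := by
    constructor
    · rintro ⟨π, hπ⟩ ⟨π', hπ'⟩ h
      simp only [Subtype.mk.injEq] at h
      refine Subtype.ext (Equiv.ext fun i => ?_)
      have key : ∀ (m : ℕ) (hm : m < n), ((π ⟨m, hm⟩ : Fin n) : ℕ) = ((π' ⟨m, hm⟩ : Fin n) : ℕ) := by
        intro m hm
        have e := congrArg (fun l : List ℕ => l.getD m 0) h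
        have g1 : (toL π).getD m 0 = ((π ⟨m, hm⟩ : Fin n) : ℕ) := by
          rw [List.getD_eq_getElem _ _ (by rw [toL_length]; exact hm)]
          show (toL π).get ⟨m, by rw [toL_length]; exact hm⟩ = _
          rw [toL_get]
          exact congrArg (fun x : Fin n => (x : ℕ)) (congrArg π (Fin.ext rfl))
        have g2 : (toL π').getD m 0 = ((π' ⟨m, hm⟩ : Fin n) : ℕ) := by
          rw [List.getD_eq_getElem _ _ (by rw [toL_length]; exact hm)]
          show (toL π').get ⟨m, by rw [toL_length]; exact hm⟩ = _
          rw [toL_get]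
          exact congrArg (fun x : Fin n => (x : ℕ)) (congrArg π' (Fin.ext rfl))
        exact (g1.symm.trans e).trans g2
      exact Fin.ext (key i.1 i.2)
    · rintro ⟨l, hl⟩
      rw [mem_BS] at hl
      obtain ⟨hperm, hav, -⟩ := hl
      have hlen : l.length = n := perm_range_length hperm
      have hnd : l.Nodup := perm_range_nodup hperm
      have hmem : ∀ i : Fin n, l.get ⟨i.1, by omega⟩ < n := fun i =>
        perm_range_lt hperm (l.get_mem _)
      set f : Fin n → Fin n := fun i => ⟨l.get ⟨i.1, by omega⟩, hmem i⟩ with hfdef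
      have hinj : Function.Injective f := by
        intro i j h
        have h' : l.get ⟨i.1, by omega⟩ = l.get ⟨j.1, by omega⟩ := by
          simpa [hfdef, Fin.ext_iff] using h
        have := List.nodup_iff_injective_get.mp hnd h'
        exact Fin.ext (by simpa using congrArg Fin.val this)
      let π : Equiv.Perm (Fin n) := Equiv.ofBijective f (Finite.injective_iff_bijective.mp hinj)
      have htoL : toL π = l := by
        refine List.ext_get (by rw [toL_length, hlen]) fun m h₁ h₂ => ?_
        rw [toL_get]
        rfl
      have hAv : Avoids321 π := by
        rw [← toL_av_iff, htoL]
        exact hav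
      exact ⟨⟨π, hAv⟩, Subtype.ext htoL⟩
  rw [Nat.card_eq_of_bijective _ hf]
  rw [Nat.card_eq_fintype_card, Fintype.card_coe]
  rfl

/-- The generating function `A(t) = Σ c_n tⁿ`, where `c_n` is the number of
321-avoiding permutations of `{1,...,n}`, satisfies `t A(t)² − A(t) + 1 = 0`. -/
theorem avoids321_gf_quadratic :
    (PowerSeries.X : PowerSeries ℚ) *
        (PowerSeries.mk fun n => (Nat.card {π : Equiv.Perm (Fin n) // Avoids321 π} : ℚ)) ^ 2 -
      (PowerSeries.mk fun n => (Nat.card {π : Equiv.Perm (Fin n) // Avoids321 π} : ℚ)) + 1 = 0 := by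
  set A : PowerSeries ℚ :=
    PowerSeries.mk fun n => (Nat.card {π : Equiv.Perm (Fin n) // Avoids321 π} : ℚ) with hA
  have hc : ∀ m, PowerSeries.coeff m A = (b m 0 : ℚ) := fun m => by
    rw [hA, PowerSeries.coeff_mk, natCard_avoiders]
  ext n
  rw [map_add, map_sub, PowerSeries.coeff_one, map_zero]
  cases n with
  | zero =>
    rw [PowerSeries.coeff_zero_eq_constantCoeff]
    simp only [map_mul, PowerSeries.constantCoeff_X, zero_mul]
    rw [← PowerSeries.coeff_zero_eq_constantCoeff, hc 0]
    rw [show b 0 0 = 1 from b_zero_zero]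
    norm_num
  | succ m =>
    rw [PowerSeries.coeff_succ_X_mul, sq, PowerSeries.coeff_mul,
      Finset.Nat.sum_antidiagonal_eq_sum_range_succ_mk]
    simp only [hc]
    have : ∑ k ∈ Finset.range (m + 1), ((b k 0 : ℚ) * (b (m - k) 0 : ℚ)) = (b (m + 1) 0 : ℚ) := by
      rw [b_conv m]
      push_cast
      rfl
    rw [this]
    simp
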